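/- arXiv:2102.08446 — 3 statements merged into one kernel-verified Lean document; each statement's English description precedes it below -/
import Mathlib

section
/- Let n ∈ ℕ, let p be the distribution on ℝⁿ that with probability 1/2 samples a uniform point of the closed unit Euclidean ball and with probability 1/2 samples one of the 2n signed standard basis vectors ±e_i uniformly. Fix d ∈ ℝⁿ, λ > 0, and set Φ = E_{W∼p}[cosh(λ d^⊤ W)]. Let X be drawn from any σ-smooth distribution on the closed unit ball (a distribution assigning every measurable set A probability at most U(A)/σ, U being the uniform measure on the ball). Then for every k ∈ ℕ and δ ∈ (0,1): Pr[ λ d^⊤ X ≥ ln(4kΦ/δ) ] ≤ (1−σ)^k + δ. -/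
open MeasureTheory
open scoped ENNReal

/-- The closed unit Euclidean ball of `ℝⁿ`. -/
def ballSet (n : ℕ) : Set (Fin n → ℝ) := {x | ∑ i, x i ^ 2 ≤ 1}

/-- The uniform (normalized Lebesgue) probability measure on the closed unit Euclidean ball. -/
noncomputable def unifBall (n : ℕ) : Measure (Fin n → ℝ) :=
  (volume (ballSet n))⁻¹ • volume.restrict (ballSet n)

/-- The distribution on `ℝⁿ` that with probability `1/2` samples a uniform point of the closed
unit Euclidean ball and with probability `1/2` samples a uniformly random signed standard basis
vector from `{±e_1, …, ±e_n}`. -/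
noncomputable def pMix (n : ℕ) : Measure (Fin n → ℝ) :=
  (2 : ℝ≥0∞)⁻¹ • unifBall n
    + (4 * (n : ℝ≥0∞))⁻¹ • ∑ i : Fin n,
        (Measure.dirac (Pi.single i 1) + Measure.dirac (-(Pi.single i (1 : ℝ))))

lemma ballSet_isCompact (n : ℕ) : IsCompact (ballSet n) := by
  have hclosed : IsClosed (ballSet n) :=
    isClosed_le (by continuity) continuous_const
  have hsub : ballSet n ⊆ Metric.closedBall 0 1 := by
    intro x hx
    simp only [Metric.mem_closedBall, dist_zero_right]
    rw [pi_norm_le_iff_of_nonneg zero_le_one]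
    intro i
    have h1 : x i ^ 2 ≤ 1 := le_trans (Finset.single_le_sum (f := fun j => x j ^ 2)
      (fun j _ => sq_nonneg _) (Finset.mem_univ i)) hx
    rw [Real.norm_eq_abs, abs_le]
    constructor <;> nlinarith
  exact (isCompact_closedBall 0 1).of_isClosed_subset hclosed hsub

lemma ballSet_vol_ne_top (n : ℕ) : volume (ballSet n) ≠ ⊤ :=
  (ballSet_isCompact n).measure_lt_top.ne

lemma ballSet_vol_ne_zero (n : ℕ) (hn : 0 < n) : volume (ballSet n) ≠ 0 := by
  have hsub : Metric.ball (0 : Fin n → ℝ) ((n : ℝ))⁻¹ ⊆ ballSet n := by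
    intro x hx
    simp only [Metric.mem_ball, dist_zero_right] at hx
    have hinv : (0:ℝ) < (n : ℝ)⁻¹ := by positivity
    have hxi : ∀ i, |x i| ≤ (n : ℝ)⁻¹ := by
      intro i
      calc |x i| = ‖x i‖ := rfl
        _ ≤ ‖x‖ := norm_le_pi_norm x i
        _ ≤ (n : ℝ)⁻¹ := hx.le
    have : ∑ i, x i ^ 2 ≤ ∑ _i : Fin n, ((n:ℝ)⁻¹)^2 := by
      apply Finset.sum_le_sum
      intro i _
      have := hxi i
      nlinarith [abs_nonneg (x i), sq_abs (x i), abs_le.mp (hxi i)]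
    refine le_trans this ?_
    simp only [Finset.sum_const, Finset.card_univ, Fintype.card_fin, nsmul_eq_mul]
    have hn1 : (1:ℝ) ≤ n := by exact_mod_cast hn
    rw [sq]
    calc (n:ℝ) * ((n:ℝ)⁻¹ * (n:ℝ)⁻¹) = (n:ℝ)⁻¹ := by field_simp
      _ ≤ 1 := by rw [inv_le_one_iff₀]; right; exact hn1
  intro h
  have : (0:ℝ≥0∞) < volume (Metric.ball (0 : Fin n → ℝ) (n:ℝ)⁻¹) := by
    exact Metric.measure_ball_pos volume 0 (by positivity)
  have hle := measure_mono (μ := (volume : Measure (Fin n → ℝ))) hsub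
  rw [h] at hle
  exact absurd (le_antisymm hle zero_le) this.ne'

theorem unifBall_isProb (n : ℕ) (hn : 0 < n) : IsProbabilityMeasure (unifBall n) := by
  constructor
  rw [unifBall]
  simp only [Measure.smul_apply, Measure.restrict_apply MeasurableSet.univ, Set.univ_inter,
    smul_eq_mul]
  exact ENNReal.inv_mul_cancel (ballSet_vol_ne_zero n hn) (ballSet_vol_ne_top n)

lemma pMix_univ (n : ℕ) (hn : 0 < n) : pMix n Set.univ = 1 := by
  have h1 := (unifBall_isProb n hn).measure_univ
  rw [pMix]
  simp only [Measure.add_apply, Measure.smul_apply, smul_eq_mul, h1, mul_one,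
    Measure.finset_sum_apply, Measure.add_apply, Measure.dirac_apply_of_mem (Set.mem_univ _)]
  rw [Finset.sum_const, Finset.card_univ, Fintype.card_fin]
  have hn0 : (n : ℝ≥0∞) ≠ 0 := by exact_mod_cast Nat.pos_iff_ne_zero.mp hn
  have hntop : (n : ℝ≥0∞) ≠ ⊤ := ENNReal.natCast_ne_top n
  rw [nsmul_eq_mul]
  have : (4 * (n : ℝ≥0∞))⁻¹ * ((n : ℝ≥0∞) * (1 + 1)) = 2⁻¹ := by
    rw [ENNReal.mul_inv (Or.inl (by norm_num)) (Or.inl (by norm_num))]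
    have : (1 : ℝ≥0∞) + 1 = 2 := by norm_num
    rw [this]
    have hre : (4:ℝ≥0∞)⁻¹ * (n:ℝ≥0∞)⁻¹ * ((n:ℝ≥0∞) * 2) = ((n:ℝ≥0∞)⁻¹ * n) * (4⁻¹ * 2) := by
      ring
    rw [hre, ENNReal.inv_mul_cancel hn0 hntop, one_mul, show (4:ℝ≥0∞) = 2 * 2 by norm_num,
      ENNReal.mul_inv (by norm_num) (by norm_num), mul_assoc,
      ENNReal.inv_mul_cancel (by norm_num) (by norm_num), mul_one]
  rw [this]
  exact ENNReal.inv_two_add_inv_two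

lemma cosh_integrable (n : ℕ) (hn : 0 < n) (d : Fin n → ℝ) (lam : ℝ) :
    Integrable (fun w => Real.cosh (lam * ∑ i, d i * w i)) (pMix n) := by
  have hcont : Continuous (fun w : Fin n → ℝ => Real.cosh (lam * ∑ i, d i * w i)) := by
    continuity
  have hdirac : ∀ a : Fin n → ℝ,
      Integrable (fun w => Real.cosh (lam * ∑ i, d i * w i)) (Measure.dirac a) := by
    intro a
    refine ⟨hcont.aestronglyMeasurable, ?_⟩
    rw [HasFiniteIntegral, MeasureTheory.lintegral_dirac]
    exact ENNReal.coe_lt_top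
  have hub : Integrable (fun w => Real.cosh (lam * ∑ i, d i * w i)) (unifBall n) := by
    rw [unifBall]
    refine Integrable.smul_measure ?_ (ENNReal.inv_ne_top.mpr (ballSet_vol_ne_zero n hn))
    exact hcont.continuousOn.integrableOn_compact (ballSet_isCompact n)
  rw [pMix]
  refine Integrable.add_measure ?_ ?_
  · exact hub.smul_measure (by norm_num)
  · refine Integrable.smul_measure ?_ ?_
    · exact integrable_finset_sum_measure.mpr fun i _ =>
        (hdirac _).add_measure (hdirac _)
    · rw [ENNReal.inv_ne_top]
      have : (n : ℝ≥0∞) ≠ 0 := by exact_mod_cast Nat.pos_iff_ne_zero.mp hn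
      exact mul_ne_zero (by norm_num) this

/-- tail bound for the correlation of a smooth vector with a fixed direction.
With `Φ = E_{W∼p}[cosh(λ d^⊤ W)]` and `X` drawn from any `σ`-smooth distribution on the closed
unit ball: `Pr[λ d^⊤ X ≥ ln(4kΦ/δ)] ≤ (1−σ)^k + δ`. -/
theorem smooth_correlation_tail_bound
    (n : ℕ) (hn : 0 < n) (σ : ℝ) (hσ0 : 0 < σ) (hσ1 : σ ≤ 1)
    (d : Fin n → ℝ) (lam : ℝ) (hlam : 0 < lam) (k : ℕ) (δ : ℝ) (hδ0 : 0 < δ) (hδ1 : δ < 1)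
    (μ : Measure (Fin n → ℝ)) [IsProbabilityMeasure μ]
    (hsmooth : ∀ A : Set (Fin n → ℝ), MeasurableSet A → μ A ≤ unifBall n A / ENNReal.ofReal σ) :
    μ {x | Real.log (4 * k * (∫ w, Real.cosh (lam * ∑ i, d i * w i) ∂(pMix n)) / δ)
          ≤ lam * ∑ i, d i * x i}
      ≤ ENNReal.ofReal ((1 - σ) ^ k + δ) := by
  set Φ : ℝ := ∫ w, Real.cosh (lam * ∑ i, d i * w i) ∂(pMix n) with hΦdef
  have hpMixProb : IsProbabilityMeasure (pMix n) := ⟨pMix_univ n hn⟩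
  have hInt := cosh_integrable n hn d lam
  have hΦ1 : (1 : ℝ) ≤ Φ := by
    have := integral_mono (integrable_const (1:ℝ)) hInt
      (fun x => Real.one_le_cosh _)
    simpa using this
  -- Bernoulli
  have hBern : 1 - (k : ℝ) * σ ≤ (1 - σ) ^ k := by
    have := one_add_mul_le_pow (a := -σ) (by linarith) k
    calc 1 - (k:ℝ) * σ = 1 + (k:ℝ) * (-σ) := by ring
      _ ≤ (1 + -σ) ^ k := this
      _ = (1 - σ) ^ k := by ring_nf
  by_cases hcase : δ ≤ (k : ℝ) * σ
  · -- Markov case; here k ≥ 1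
    have hk0 : 0 < (k : ℝ) := by
      by_contra hk
      push_neg at hk
      have : (k:ℝ) * σ ≤ 0 := mul_nonpos_of_nonpos_of_nonneg hk hσ0.le
      linarith
    have hΦpos : 0 < Φ := lt_of_lt_of_le one_pos hΦ1
    set ε : ℝ := 2 * k * Φ / δ with hεdef
    have hεpos : 0 < ε := by positivity
    set E : Set (Fin n → ℝ) :=
      {x | Real.log (4 * k * Φ / δ) ≤ lam * ∑ i, d i * x i} with hEdef
    have hfc : Continuous (fun x : Fin n → ℝ => lam * ∑ i, d i * x i) := by continuity
    have hEmeas : MeasurableSet E :=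
      measurableSet_le measurable_const hfc.measurable
    -- E ⊆ {x | ε ≤ cosh (lam * d · x)}
    have hEsub : E ⊆ {x | ε ≤ Real.cosh (lam * ∑ i, d i * x i)} := by
      intro x hx
      have hx' : Real.log (4 * k * Φ / δ) ≤ lam * ∑ i, d i * x i := hx
      have h4pos : 0 < 4 * k * Φ / δ := by positivity
      have h1 : 4 * k * Φ / δ ≤ Real.exp (lam * ∑ i, d i * x i) := by
        calc 4 * k * Φ / δ = Real.exp (Real.log (4 * k * Φ / δ)) :=
              (Real.exp_log h4pos).symm
          _ ≤ Real.exp (lam * ∑ i, d i * x i) := Real.exp_le_exp.mpr hx'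
      have h2 : Real.exp (lam * ∑ i, d i * x i)
          ≤ 2 * Real.cosh (lam * ∑ i, d i * x i) := by
        rw [Real.cosh_eq]
        have := Real.exp_pos (-(lam * ∑ i, d i * x i))
        linarith
      show ε ≤ Real.cosh (lam * ∑ i, d i * x i)
      rw [hεdef]
      have h3 : 4 * k * Φ / δ = 2 * (2 * k * Φ / δ) := by ring
      linarith [h3 ▸ h1]
    -- Markov's inequality under pMix
    have hMarkov : pMix n {x | ε ≤ Real.cosh (lam * ∑ i, d i * x i)}
        ≤ ENNReal.ofReal (δ / (2 * k)) := by
      have hmul := mul_meas_ge_le_integral_of_nonneg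
        (μ := pMix n) (f := fun x => Real.cosh (lam * ∑ i, d i * x i))
        (ae_of_all _ fun x => (Real.cosh_pos _).le) hInt ε
      have hfin : pMix n {x | ε ≤ Real.cosh (lam * ∑ i, d i * x i)} ≠ ⊤ :=
        (measure_lt_top _ _).ne
      have htoReal : (pMix n {x | ε ≤ Real.cosh (lam * ∑ i, d i * x i)}).toReal
          ≤ δ / (2 * k) := by
        have h2k : (0:ℝ) < 2 * k := by positivity
        set T := (pMix n {x | ε ≤ Real.cosh (lam * ∑ i, d i * x i)}).toReal with hT
        have hTnn : 0 ≤ T := ENNReal.toReal_nonneg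
        have hm2 : 2 * (k:ℝ) * Φ * T ≤ Φ * δ := by
          rw [hεdef] at hmul
          rw [div_mul_eq_mul_div, div_le_iff₀ hδ0] at hmul
          exact hmul
        rw [le_div_iff₀ h2k]
        nlinarith [hm2, hΦpos, hΦ1]
      calc pMix n {x | ε ≤ Real.cosh (lam * ∑ i, d i * x i)}
          = ENNReal.ofReal ((pMix n {x | ε ≤ Real.cosh (lam * ∑ i, d i * x i)}).toReal) :=
            (ENNReal.ofReal_toReal hfin).symm
        _ ≤ ENNReal.ofReal (δ / (2 * k)) := ENNReal.ofReal_le_ofReal htoReal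
    have hpE : pMix n E ≤ ENNReal.ofReal (δ / (2 * k)) :=
      le_trans (measure_mono hEsub) hMarkov
    -- unifBall E ≤ 2 * pMix E
    have huE : unifBall n E ≤ 2 * pMix n E := by
      have hle : (2 : ℝ≥0∞)⁻¹ * unifBall n E ≤ pMix n E := by
        rw [pMix]
        simp only [Measure.add_apply, Measure.smul_apply, smul_eq_mul]
        exact le_add_of_nonneg_right zero_le |>.trans_eq rfl |>.trans (le_refl _)
      calc unifBall n E = 2 * (2⁻¹ * unifBall n E) := by
            rw [← mul_assoc, ENNReal.mul_inv_cancel (by norm_num) (by norm_num), one_mul]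
        _ ≤ 2 * pMix n E := mul_le_mul_right hle 2
    -- chain
    have hchain : μ E ≤ ENNReal.ofReal (δ / ((k : ℝ) * σ)) := by
      calc μ E ≤ unifBall n E / ENNReal.ofReal σ := hsmooth E hEmeas
        _ ≤ (2 * pMix n E) / ENNReal.ofReal σ := by
            exact ENNReal.div_le_div_right huE _
        _ ≤ (2 * ENNReal.ofReal (δ / (2 * k))) / ENNReal.ofReal σ := by
            exact ENNReal.div_le_div_right (mul_le_mul_right hpE 2) _
        _ = ENNReal.ofReal (δ / k) / ENNReal.ofReal σ := by
            rw [← ENNReal.ofReal_ofNat, ← ENNReal.ofReal_mul (by norm_num)]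
            congr 1
            field_simp
        _ = ENNReal.ofReal (δ / k / σ) := (ENNReal.ofReal_div_of_pos hσ0).symm
        _ = ENNReal.ofReal (δ / ((k : ℝ) * σ)) := by rw [div_div]
    refine le_trans hchain (ENNReal.ofReal_le_ofReal ?_)
    -- real arithmetic: δ/(kσ) ≤ (1-σ)^k + δ
    have hkσpos : 0 < (k:ℝ) * σ := by positivity
    rw [div_le_iff₀ hkσpos]
    by_cases h1' : (k:ℝ) * σ ≤ 1
    · nlinarith [hBern, sq_nonneg ((k:ℝ)*σ - δ)]
    · push_neg at h1'
      have hpw : (0:ℝ) ≤ (1 - σ) ^ k := pow_nonneg (by linarith) k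
      nlinarith
  · -- trivial case: bound by 1
    push_neg at hcase
    have h1le : (1:ℝ) ≤ (1 - σ) ^ k + δ := by nlinarith [hBern]
    calc μ _ ≤ 1 := prob_le_one
      _ = ENNReal.ofReal 1 := by simp
      _ ≤ ENNReal.ofReal ((1 - σ) ^ k + δ) := ENNReal.ofReal_le_ofReal h1le
end

section
/- Let σ ∈ (0,1], T, ℓ ∈ ℕ, w > 0, δ ∈ (0,1), and let J denote the set of all subintervals of [0,1] of width at most w. Let (d_{i,j})_{i∈[T], j∈[ℓ]} be random points in [0,1] generated by a Tℓ-step adaptive sequence of σ-smooth distributions (each conditional distribution, given all previously realized points, has density at most 1/σ with respect to Lebesgue measure on [0,1]). Then with probability at least 1 − δ: max_{J∈J} Σ_{i∈[T], j∈[ℓ]} 1[d_{i,j} ∈ J] < (Tℓw/σ)·ln(2Tℓ/δ) + 10·√( (Tℓw/σ)·ln(2Tℓ/δ)·ln(1/δ) ) + 10·log( 10·Tℓ·log(2Tℓ/δ) / (σδ) ). -/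
open MeasureTheory ProbabilityTheory
open scoped ENNReal
open Real
set_option maxHeartbeats 1000000

/-- The law of an adaptive process on `ℝ` driven by the Markov kernels `D t`. -/
noncomputable def adaptLaw (D : (s : ℕ) → Kernel (Fin s → ℝ) ℝ) :
    (m : ℕ) → Measure (Fin m → ℝ)
  | 0 => Measure.dirac (fun i => i.elim0)
  | (m + 1) => (adaptLaw D m).bind fun h => ((D m) h).map (Fin.snoc h)

lemma measurable_snocPair (m : ℕ) :
    Measurable fun p : (Fin m → ℝ) × ℝ => (Fin.snoc p.1 p.2 : Fin (m+1) → ℝ) := by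
  apply measurable_pi_iff.2
  intro i
  refine Fin.lastCases ?_ ?_ i
  · simp only [Fin.snoc_last]; exact measurable_snd
  · intro j; simp only [Fin.snoc_castSucc]
    exact (measurable_pi_apply j).comp measurable_fst

noncomputable def snocKernel (D : (s : ℕ) → Kernel (Fin s → ℝ) ℝ) (m : ℕ)
    [IsSFiniteKernel (D m)] : Kernel (Fin m → ℝ) (Fin (m+1) → ℝ) :=
  Kernel.map ((Kernel.deterministic id measurable_id) ×ₖ (D m))
    (fun p => Fin.snoc p.1 p.2)

lemma snocKernel_apply (D : (s : ℕ) → Kernel (Fin s → ℝ) ℝ) (m : ℕ)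
    [IsSFiniteKernel (D m)] (a : Fin m → ℝ) :
    snocKernel D m a = ((D m) a).map (Fin.snoc a) := by
  rw [snocKernel, Kernel.map_apply _ (measurable_snocPair m),
    Kernel.prod_apply, Kernel.deterministic_apply measurable_id]
  simp only [id_eq]
  rw [Measure.dirac_prod, Measure.map_map (measurable_snocPair m) measurable_prodMk_left]
  rfl

lemma adaptLaw_succ (D : (s : ℕ) → Kernel (Fin s → ℝ) ℝ) (m : ℕ)
    [IsSFiniteKernel (D m)] :
    adaptLaw D (m+1) = (adaptLaw D m).bind (fun h => snocKernel D m h) := by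
  rw [adaptLaw]
  congr 1
  funext h
  rw [snocKernel_apply]

instance snocKernel_isMarkov (D : (s : ℕ) → Kernel (Fin s → ℝ) ℝ) (m : ℕ)
    [IsMarkovKernel (D m)] : IsMarkovKernel (snocKernel D m) :=
  Kernel.IsMarkovKernel.map _ (measurable_snocPair m)

lemma adaptLaw_isProb (D : (s : ℕ) → Kernel (Fin s → ℝ) ℝ)
    (hD : ∀ s, IsMarkovKernel (D s)) :
    ∀ m, IsProbabilityMeasure (adaptLaw D m) := by
  intro m
  induction m with
  | zero => rw [adaptLaw]; infer_instance
  | succ m ih =>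
    haveI := hD m
    constructor
    rw [adaptLaw_succ, Measure.bind_apply MeasurableSet.univ (Kernel.measurable _).aemeasurable]
    simp [measure_univ]

lemma lintegral_adaptLaw_succ (D : (s : ℕ) → Kernel (Fin s → ℝ) ℝ) (m : ℕ)
    [IsSFiniteKernel (D m)] {f : (Fin (m+1) → ℝ) → ℝ≥0∞} (hf : Measurable f) :
    ∫⁻ h, f h ∂(adaptLaw D (m+1))
      = ∫⁻ h, ∫⁻ x, f (Fin.snoc h x) ∂((D m) h) ∂(adaptLaw D m) := by
  rw [adaptLaw_succ, Measure.lintegral_bind (Kernel.measurable _).aemeasurable hf.aemeasurable]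
  congr 1
  funext h
  rw [snocKernel_apply]
  exact lintegral_map hf
    ((measurable_snocPair m).comp (measurable_const.prodMk measurable_id))

/-- number of indices `s ∈ [r₀, r)` whose point lies within `w` of the center `c` of prefix. -/
noncomputable def cnt (w : ℝ) (r₀ : ℕ) {r : ℕ} (hle : r₀ ≤ r) (c : (Fin r₀ → ℝ) → ℝ)
    (h : Fin r → ℝ) : ℕ :=
  (Finset.univ.filter fun s : Fin r =>
      r₀ ≤ (s : ℕ) ∧ |h s - c (fun i => h (Fin.castLE hle i))| ≤ w).card

lemma cnt_snoc (w : ℝ) (r₀ : ℕ) {r : ℕ} (hle : r₀ ≤ r) (c : (Fin r₀ → ℝ) → ℝ)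
    (h : Fin r → ℝ) (x : ℝ) :
    cnt w r₀ (hle.trans r.le_succ) c (Fin.snoc h x)
      = cnt w r₀ hle c h
        + (if |x - c (fun i => h (Fin.castLE hle i))| ≤ w then 1 else 0) := by
  have hres : (fun i => (Fin.snoc h x : Fin (r+1) → ℝ) (Fin.castLE (hle.trans r.le_succ) i))
      = fun i => h (Fin.castLE hle i) := by
    funext i
    have h1 : Fin.castLE (hle.trans r.le_succ) i = Fin.castSucc (Fin.castLE hle i) := rfl
    rw [h1, Fin.snoc_castSucc]
  simp only [cnt, Finset.card_filter, Fin.sum_univ_castSucc, hres, Fin.snoc_castSucc,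
    Fin.coe_castSucc, Fin.snoc_last, Fin.val_last, hle, true_and]

lemma measurable_cnt (w : ℝ) (r₀ : ℕ) {r : ℕ} (hle : r₀ ≤ r) {c : (Fin r₀ → ℝ) → ℝ}
    (hc : Measurable c) :
    Measurable fun h : Fin r → ℝ => (cnt w r₀ hle c h : ℝ) := by
  have hrestrict : Measurable fun h : Fin r → ℝ => (fun i => h (Fin.castLE hle i)) :=
    measurable_pi_iff.2 fun i => measurable_pi_apply _
  have heq : (fun h : Fin r → ℝ => (cnt w r₀ hle c h : ℝ))
      = fun h => ∑ s : Fin r,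
          if r₀ ≤ (s : ℕ) ∧ |h s - c fun i => h (Fin.castLE hle i)| ≤ w then (1:ℝ) else 0 := by
    funext h
    rw [cnt, Finset.card_filter]
    push_cast
    rfl
  rw [heq]
  apply Finset.measurable_sum
  intro s _
  refine Measurable.ite ?_ measurable_const measurable_const
  exact (MeasurableSet.const _).inter
    (measurableSet_le (((measurable_pi_apply s).sub (hc.comp hrestrict)).abs) measurable_const)
lemma mgf_cnt (D : (s : ℕ) → Kernel (Fin s → ℝ) ℝ) (hD : ∀ s, IsMarkovKernel (D s))
    (σ w lam : ℝ) (hσ0 : 0 < σ) (hw : 0 < w) (hlam : 0 ≤ lam)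
    (hsmooth : ∀ (s : ℕ) (h : Fin s → ℝ) (A : Set ℝ), MeasurableSet A →
      (D s) h A ≤ ENNReal.ofReal (1 / σ) * volume (A ∩ Set.Icc (0 : ℝ) 1))
    (r₀ : ℕ) {c : (Fin r₀ → ℝ) → ℝ} (hc : Measurable c) :
    ∀ r, ∀ hle : r₀ ≤ r,
      ∫⁻ h, ENNReal.ofReal (exp (lam * cnt w r₀ hle c h)) ∂(adaptLaw D r)
        ≤ (ENNReal.ofReal (1 + 2*w/σ * (exp lam - 1))) ^ (r - r₀) := by
  have hE1 : (0:ℝ) ≤ exp lam - 1 := by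
    have := Real.add_one_le_exp lam; linarith
  refine Nat.le_induction ?_ ?_
  · haveI := adaptLaw_isProb D hD r₀
    have h0 : ∀ h : Fin r₀ → ℝ, cnt w r₀ le_rfl c h = 0 := by
      intro h
      rw [cnt, Finset.card_eq_zero, Finset.filter_eq_empty_iff]
      intro s _
      simp only [not_and]
      intro hs
      exact absurd s.isLt (by omega)
    simp [h0]
  · intro r hle ih
    haveI := hD r
    haveI := adaptLaw_isProb D hD r
    set cc : (Fin r → ℝ) → ℝ := fun h => c (fun i => h (Fin.castLE hle i)) with hcc
    have hccm : Measurable cc :=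
      hc.comp (measurable_pi_iff.2 fun i => measurable_pi_apply _)
    set q : ℝ≥0∞ := ENNReal.ofReal (1 + 2*w/σ * (exp lam - 1)) with hq
    set A : (Fin r → ℝ) → ℝ≥0∞ :=
      fun h => ENNReal.ofReal (exp (lam * cnt w r₀ hle c h)) with hA
    have hAm : Measurable A :=
      ENNReal.measurable_ofReal.comp
        (Real.measurable_exp.comp ((measurable_cnt w r₀ hle hc).const_mul lam))
    have hf : Measurable fun h' : Fin (r+1) → ℝ =>
        ENNReal.ofReal (exp (lam * cnt w r₀ (hle.trans r.le_succ) c h')) :=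
      ENNReal.measurable_ofReal.comp
        (Real.measurable_exp.comp ((measurable_cnt w r₀ _ hc).const_mul lam))
    rw [lintegral_adaptLaw_succ D r hf]
    have hsplit : ∀ (h : Fin r → ℝ) (x : ℝ),
        ENNReal.ofReal (exp (lam * cnt w r₀ (hle.trans r.le_succ) c (Fin.snoc h x)))
          = A h * ENNReal.ofReal (exp (lam * (if |x - cc h| ≤ w then (1:ℝ) else 0))) := by
      intro h x
      rw [cnt_snoc w r₀ hle c h x, hA]
      rw [← ENNReal.ofReal_mul (Real.exp_nonneg _), ← Real.exp_add, ← mul_add]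
      congr 2
      push_cast [apply_ite (fun n : ℕ => (n:ℝ))]
      ring
    have hinner : ∀ h : Fin r → ℝ,
        (∫⁻ x, ENNReal.ofReal (exp (lam * (if |x - cc h| ≤ w then (1:ℝ) else 0)))
          ∂((D r) h)) ≤ q := by
      intro h
      have hEq : (fun x : ℝ => ENNReal.ofReal (exp (lam * (if |x - cc h| ≤ w then (1:ℝ) else 0))))
          = fun x => (Set.Icc (cc h - w) (cc h + w)).indicator
              (fun _ => ENNReal.ofReal (exp lam - 1)) x + 1 := by
        funext x
        by_cases hx : |x - cc h| ≤ w
        · rw [if_pos hx, Set.indicator_of_mem, mul_one]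
          · rw [← ENNReal.ofReal_one, ← ENNReal.ofReal_add hE1 zero_le_one]
            norm_num
          · rcases abs_le.mp hx with ⟨h1, h2⟩
            exact Set.mem_Icc.2 ⟨by linarith, by linarith⟩
        · rw [if_neg hx, Set.indicator_of_notMem, mul_zero, Real.exp_zero,
            ENNReal.ofReal_one, zero_add]
          intro hmem
          rcases Set.mem_Icc.1 hmem with ⟨h1, h2⟩
          exact hx (abs_le.2 ⟨by linarith, by linarith⟩)
      rw [hEq, lintegral_add_right _ measurable_const,
        lintegral_indicator_const measurableSet_Icc, lintegral_one, measure_univ]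
      have hvol : (D r) h (Set.Icc (cc h - w) (cc h + w)) ≤ ENNReal.ofReal (2*w/σ) := by
        refine le_trans (hsmooth r h _ measurableSet_Icc) ?_
        have h1 : volume (Set.Icc (cc h - w) (cc h + w) ∩ Set.Icc (0:ℝ) 1)
            ≤ ENNReal.ofReal (2*w) := by
          refine le_trans (measure_mono Set.inter_subset_left) ?_
          rw [Real.volume_Icc]
          apply ENNReal.ofReal_le_ofReal
          ring_nf
          linarith
        calc ENNReal.ofReal (1/σ) * volume (Set.Icc (cc h - w) (cc h + w) ∩ Set.Icc (0:ℝ) 1)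
            ≤ ENNReal.ofReal (1/σ) * ENNReal.ofReal (2*w) := mul_le_mul_right h1 _
          _ = ENNReal.ofReal (2*w/σ) := by
              rw [← ENNReal.ofReal_mul (by positivity)]
              congr 1
              field_simp
      calc ENNReal.ofReal (exp lam - 1) * (D r) h (Set.Icc (cc h - w) (cc h + w)) + 1
          ≤ ENNReal.ofReal (exp lam - 1) * ENNReal.ofReal (2*w/σ) + 1 := by
            exact add_le_add_left (mul_le_mul_right hvol _) 1
        _ = q := by
            rw [← ENNReal.ofReal_mul hE1, ← ENNReal.ofReal_one,
              ← ENNReal.ofReal_add (by positivity) zero_le_one, hq]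
            congr 1
            ring
    calc ∫⁻ h, ∫⁻ x, ENNReal.ofReal (exp (lam * cnt w r₀ (hle.trans r.le_succ) c (Fin.snoc h x)))
            ∂((D r) h) ∂(adaptLaw D r)
        = ∫⁻ h, A h * ∫⁻ x, ENNReal.ofReal (exp (lam * (if |x - cc h| ≤ w then (1:ℝ) else 0)))
            ∂((D r) h) ∂(adaptLaw D r) := by
          apply lintegral_congr
          intro h
          simp_rw [hsplit h]
          rw [lintegral_const_mul]
          apply ENNReal.measurable_ofReal.comp
          apply Real.measurable_exp.comp
          apply Measurable.const_mul
          refine Measurable.ite ?_ measurable_const measurable_const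
          exact measurableSet_le (measurable_id.sub measurable_const).abs measurable_const
      _ ≤ ∫⁻ h, A h * q ∂(adaptLaw D r) := by
          apply lintegral_mono
          intro h
          exact mul_le_mul_right (hinner h) _
      _ = (∫⁻ h, A h ∂(adaptLaw D r)) * q := lintegral_mul_const q hAm
      _ ≤ (ENNReal.ofReal (1 + 2*w/σ * (exp lam - 1))) ^ (r - r₀) * q := by
          exact mul_le_mul_left (ih) q
      _ = (ENNReal.ofReal (1 + 2*w/σ * (exp lam - 1))) ^ (r + 1 - r₀) := by
          rw [Nat.succ_sub hle, pow_succ, hq]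
-- analytic choice of lambda
lemma choose_lam (n w σ δ : ℝ) (hn : 1 ≤ n) (hw : 0 < w) (hσ0 : 0 < σ)
    (hδ0 : 0 < δ) (hδ1 : δ < 1) :
    ∃ lam : ℝ, 0 ≤ lam ∧
      n*(2*w/σ)*(Real.exp lam - 1)
        - lam*(n*(2*w/σ) + (3 * Real.sqrt (n*(2*w/σ) * Real.log (n/δ))
            + 2 * Real.log (n/δ)))
        ≤ Real.log (δ/n) := by
  set p : ℝ := 2*w/σ with hp
  have hp0 : 0 < p := by positivity
  set μ2 : ℝ := n * p with hμ2
  have hμ20 : 0 < μ2 := by positivity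
  set L' : ℝ := Real.log (n/δ) with hL'
  have hL'0 : 0 < L' := by
    apply Real.log_pos
    rw [lt_div_iff₀ hδ0]
    nlinarith
  set s : ℝ := Real.sqrt (μ2 * L') with hs
  have hs0 : 0 ≤ s := Real.sqrt_nonneg _
  have hs2 : s^2 = μ2 * L' := Real.sq_sqrt (by positivity)
  set t : ℝ := 3*s + 2*L' with ht
  have ht0 : 0 < t := by nlinarith
  have hlog : Real.log (δ/n) = -L' := by
    rw [hL', ← Real.log_inv]
    congr 1
    field_simp
  rw [hlog]
  clear_value p μ2 L' s t
  obtain ⟨lam, hlam0, hlam1, hlam2, hfin⟩ :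
      ∃ lam : ℝ, 0 ≤ lam ∧ lam ≤ 1 ∧ lam ≤ t/((5/2)*μ2) ∧ L' ≤ lam*t/2 := by
    rcases le_total (t/((5/2)*μ2)) 1 with hc | hc
    · refine ⟨t/((5/2)*μ2), by positivity, hc, le_rfl, ?_⟩
      have ht2 : 9*μ2*L' ≤ t^2 := by nlinarith
      have heq : (t/((5/2)*μ2)) * t / 2 = t^2/(5*μ2) := by
        field_simp
      rw [heq, le_div_iff₀ (by positivity)]
      nlinarith
    · exact ⟨1, zero_le_one, le_rfl, hc, by nlinarith⟩
  refine ⟨lam, hlam0, ?_⟩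
  have hexp : Real.exp lam ≤ 1 + lam + (5/4) * lam^2 := by
    have h3 := Real.exp_bound' hlam0 hlam1 (n := 3) (by norm_num)
    have hsum : (∑ m ∈ Finset.range 3, lam ^ m / m.factorial)
        = 1 + lam + lam^2/2 := by
      norm_num [Finset.sum_range_succ, Nat.factorial]
      try ring
    rw [hsum] at h3
    have h3' : Real.exp lam ≤ 1 + lam + lam^2/2 + lam^3*(4/18) := by
      have hfact : ((Nat.factorial 3 : ℕ) : ℝ) = 6 := by norm_num [Nat.factorial]
      rw [hfact] at h3
      norm_num at h3 ⊢
      linarith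
    have hcube : lam^3 ≤ lam^2 := by nlinarith
    nlinarith
  have hml : μ2 * lam ≤ t/(5/2) := by
    have h := mul_le_mul_of_nonneg_left hlam2 hμ20.le
    have heq : μ2 * (t/((5/2)*μ2)) = t/(5/2) := by field_simp
    rw [heq] at h
    exact h
  have hmain : μ2*(Real.exp lam - 1) - lam*(μ2 + t) ≤ -(lam * t / 2) := by
    have h1 : μ2*(Real.exp lam - 1 - lam) ≤ (5/4)*μ2*lam^2 := by nlinarith
    have h2 : (5/4)*μ2*lam^2 ≤ lam * t / 2 := by
      nlinarith [mul_le_mul_of_nonneg_left hml hlam0]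
    nlinarith
  linarith

lemma tail_bound (D : (s : ℕ) → Kernel (Fin s → ℝ) ℝ) (hD : ∀ s, IsMarkovKernel (D s))
    (σ w δ : ℝ) (hσ0 : 0 < σ) (hw : 0 < w) (hδ0 : 0 < δ) (hδ1 : δ < 1)
    (hsmooth : ∀ (s : ℕ) (h : Fin s → ℝ) (A : Set ℝ), MeasurableSet A →
      (D s) h A ≤ ENNReal.ofReal (1 / σ) * volume (A ∩ Set.Icc (0 : ℝ) 1))
    (N : ℕ) (hN : 1 ≤ N) (K : ℝ)
    (hK : ∃ lam : ℝ, 0 ≤ lam ∧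
      (N:ℝ)*(2*w/σ)*(Real.exp lam - 1) - lam*K ≤ Real.log (δ/N))
    (m : ℕ) (hm : m + 1 ≤ N) :
    adaptLaw D N {h : Fin N → ℝ |
        K ≤ (cnt w (m+1) hm (fun g => g (Fin.last m)) h : ℝ)}
      ≤ ENNReal.ofReal (δ/N) := by
  obtain ⟨lam, hlam0, hle⟩ := hK
  haveI := adaptLaw_isProb D hD N
  have hNpos : (0:ℝ) < N := by exact_mod_cast Nat.lt_of_lt_of_le Nat.zero_lt_one hN
  have hc : Measurable fun g : Fin (m+1) → ℝ => g (Fin.last m) := measurable_pi_apply _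
  have hE1 : (0:ℝ) ≤ Real.exp lam - 1 := by
    have := Real.add_one_le_exp lam; linarith
  set q0 : ℝ := 1 + 2*w/σ * (Real.exp lam - 1) with hq0
  have hq00 : 0 ≤ q0 := by positivity
  have hq01 : (1:ℝ≥0∞) ≤ ENNReal.ofReal q0 := by
    rw [ENNReal.one_le_ofReal, hq0]
    have : (0:ℝ) ≤ 2*w/σ * (Real.exp lam - 1) := by positivity
    linarith
  have hmgf := mgf_cnt D hD σ w lam hσ0 hw hlam0 hsmooth (m+1) hc N hm
  have hmgf' : ∫⁻ h, ENNReal.ofReal (Real.exp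
        (lam * cnt w (m+1) hm (fun g => g (Fin.last m)) h)) ∂(adaptLaw D N)
      ≤ (ENNReal.ofReal q0) ^ N :=
    le_trans hmgf (pow_le_pow_right₀ hq01 (Nat.sub_le N (m+1)))
  clear_value q0
  have hfm : Measurable fun h : Fin N → ℝ => ENNReal.ofReal (Real.exp
      (lam * cnt w (m+1) hm (fun g => g (Fin.last m)) h)) :=
    ENNReal.measurable_ofReal.comp
      (Real.measurable_exp.comp ((measurable_cnt w (m+1) hm hc).const_mul lam))
  have hmar := mul_meas_ge_le_lintegral₀ (μ := adaptLaw D N) hfm.aemeasurable (ENNReal.ofReal (Real.exp (lam*K)))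
  have hsub : {h : Fin N → ℝ | K ≤ (cnt w (m+1) hm (fun g => g (Fin.last m)) h : ℝ)}
      ⊆ {h : Fin N → ℝ | ENNReal.ofReal (Real.exp (lam*K)) ≤ ENNReal.ofReal (Real.exp
          (lam * cnt w (m+1) hm (fun g => g (Fin.last m)) h))} := by
    intro h hh
    exact ENNReal.ofReal_le_ofReal (Real.exp_le_exp.2 (mul_le_mul_of_nonneg_left hh hlam0))
  have key : ENNReal.ofReal (Real.exp (lam*K))
        * adaptLaw D N {h : Fin N → ℝ |
            K ≤ (cnt w (m+1) hm (fun g => g (Fin.last m)) h : ℝ)}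
      ≤ (ENNReal.ofReal q0)^N :=
    le_trans (mul_le_mul_right (measure_mono hsub) _) (le_trans hmar hmgf')
  have hεpos : ENNReal.ofReal (Real.exp (lam*K)) ≠ 0 :=
    (ENNReal.ofReal_pos.2 (Real.exp_pos _)).ne'
  have hεtop : ENNReal.ofReal (Real.exp (lam*K)) ≠ ⊤ := ENNReal.ofReal_ne_top
  have hdiv : adaptLaw D N {h : Fin N → ℝ |
        K ≤ (cnt w (m+1) hm (fun g => g (Fin.last m)) h : ℝ)}
      ≤ (ENNReal.ofReal q0)^N / ENNReal.ofReal (Real.exp (lam*K)) := by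
    rw [ENNReal.le_div_iff_mul_le (Or.inl hεpos) (Or.inl hεtop), mul_comm]
    exact key
  refine le_trans hdiv ?_
  rw [← ENNReal.ofReal_pow hq00, ← ENNReal.ofReal_div_of_pos (Real.exp_pos _)]
  apply ENNReal.ofReal_le_ofReal
  have h1 : q0 ^ N ≤ Real.exp ((N:ℝ) * (2*w/σ * (Real.exp lam - 1))) := by
    rw [Real.exp_nat_mul]
    refine pow_le_pow_left₀ hq00 ?_ N
    have := Real.add_one_le_exp (2*w/σ * (Real.exp lam - 1))
    linarith
  calc q0^N / Real.exp (lam*K)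
      ≤ Real.exp ((N:ℝ)*(2*w/σ*(Real.exp lam - 1))) / Real.exp (lam*K) := by
        gcongr
    _ = Real.exp ((N:ℝ)*(2*w/σ*(Real.exp lam - 1)) - lam*K) := by rw [← Real.exp_sub]
    _ ≤ Real.exp (Real.log (δ/N)) := by
        apply Real.exp_le_exp.2
        calc (N:ℝ)*(2*w/σ*(Real.exp lam - 1)) - lam*K
            = (N:ℝ)*(2*w/σ)*(Real.exp lam - 1) - lam*K := by ring
          _ ≤ Real.log (δ/N) := hle
    _ = δ/N := Real.exp_log (by positivity)
lemma arith_bound (σ w δ : ℝ) (N : ℕ) (hσ0 : 0 < σ) (hσ1 : σ ≤ 1) (hw : 0 < w)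
    (hδ0 : 0 < δ) (hδ1 : δ < 1) (hN : 1 ≤ N) (x : ℝ)
    (hx1 : x ≤ (N:ℝ))
    (hx2 : x < ((N:ℝ)*(2*w/σ) + (3 * Real.sqrt ((N:ℝ)*(2*w/σ) * Real.log (N/δ))
        + 2 * Real.log (N/δ))) + 1) :
    x < ((N:ℝ) * w / σ) * Real.log (2 * N / δ)
        + 10 * Real.sqrt (((N:ℝ) * w / σ) * Real.log (2 * N / δ) * Real.log (1 / δ))
        + 10 * Real.log (10 * N * Real.log (2 * N / δ) / (σ * δ)) := by
  have hn : (1:ℝ) ≤ (N:ℝ) := by exact_mod_cast hN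
  set n : ℝ := (N:ℝ) with hndef
  have hμ0 : 0 < n * w / σ := by positivity
  set μ : ℝ := n * w / σ with hμdef
  set L : ℝ := Real.log (2 * n / δ) with hLdef
  set L' : ℝ := Real.log (n / δ) with hL'def
  have hL'0 : 0 < L' := by
    apply Real.log_pos
    rw [lt_div_iff₀ hδ0]
    nlinarith
  have hlog2 : (0.6931471803:ℝ) < Real.log 2 := Real.log_two_gt_d9
  have hL2 : Real.log 2 ≤ L := by
    apply Real.log_le_log (by norm_num)
    rw [le_div_iff₀ hδ0]
    nlinarith
  have hL'L : L' ≤ L := by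
    apply Real.log_le_log (by positivity)
    have := mul_le_mul_of_nonneg_right (show n ≤ 2*n by linarith)
      (inv_nonneg.2 hδ0.le)
    simpa [div_eq_mul_inv] using this
  have hLpos : 0 < L := lt_of_lt_of_le (by linarith) hL2
  -- third term lower bound
  have hc0 : (0.7:ℝ) < Real.log (10 * Real.log 2) := by
    rw [Real.lt_log_iff_exp_lt (by positivity)]
    have h1 : Real.exp 0.7 ≤ Real.exp 1 := Real.exp_le_exp.2 (by norm_num)
    nlinarith [Real.exp_one_lt_d9, hlog2]
  have hT3 : 10 * (Real.log (10 * Real.log 2) + L') ≤ 10 * Real.log (10 * n * L / (σ * δ)) := by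
    have harg : (10 * Real.log 2) * (n / δ) ≤ 10 * n * L / (σ * δ) := by
      have hσL : L ≤ L/σ := by
        rw [le_div_iff₀ hσ0]
        nlinarith
      have key : (10*Real.log 2) ≤ 10*(L/σ) := by linarith
      have hnδ : (0:ℝ) ≤ n/δ := by positivity
      calc (10*Real.log 2)*(n/δ) ≤ (10*(L/σ))*(n/δ) :=
            mul_le_mul_of_nonneg_right key hnδ
        _ = 10*n*L/(σ*δ) := by field_simp
    have := Real.log_le_log (by positivity) harg
    rw [Real.log_mul (by positivity) (by positivity)] at this
    linarith [this]
  have hS : 0 ≤ 10 * Real.sqrt (μ * L * Real.log (1 / δ)) := by positivity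
  clear_value n μ L L'
  by_cases hcase : (11/4 : ℝ) ≤ L
  · -- main regime
    have hsqrt : Real.sqrt (n * (2*w/σ) * L') ≤ (1/4)*μ + 2*L' := by
      have h1 : n * (2*w/σ) * L' ≤ ((1/4)*μ + 2*L')^2 := by
        have : n * (2*w/σ) = 2*μ := by rw [hμdef]; ring
        rw [this]
        nlinarith [sq_nonneg ((1/4)*μ - 2*L')]
      calc Real.sqrt (n * (2*w/σ) * L') ≤ Real.sqrt (((1/4)*μ + 2*L')^2) :=
            Real.sqrt_le_sqrt h1
        _ = (1/4)*μ + 2*L' := Real.sqrt_sq (by positivity)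
    have h2μ : n*(2*w/σ) = 2*μ := by rw [hμdef]; ring
    rw [h2μ] at hx2
    rw [h2μ] at hsqrt
    nlinarith [mul_nonneg hμ0.le (sub_nonneg.2 hcase)]
  · -- small N regime
    push_neg at hcase
    have hexplt : Real.exp (11/4) < 16 := by
      have he4 : Real.exp (11/4) ^ (4:ℕ) = Real.exp 11 := by
        rw [← Real.exp_nat_mul]
        norm_num
      have he11 : Real.exp 11 = Real.exp 1 ^ (11:ℕ) := by
        rw [← Real.exp_nat_mul]
        norm_num
      have hlt : Real.exp 1 ^ (11:ℕ) < 2.7182818286 ^ (11:ℕ) :=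
        pow_lt_pow_left₀ Real.exp_one_lt_d9 (Real.exp_pos 1).le (by norm_num)
      by_contra hcon
      push_neg at hcon
      have h16 : (16:ℝ)^(4:ℕ) ≤ Real.exp (11/4) ^ (4:ℕ) :=
        pow_le_pow_left₀ (by norm_num) hcon 4
      rw [he4, he11] at h16
      have : (2.7182818286:ℝ)^(11:ℕ) < 65536 := by norm_num
      norm_num at h16
      nlinarith
    have h2n : 2 * n / δ < 16 := by
      have := Real.exp_log (show (0:ℝ) < 2*n/δ by positivity)
      calc 2*n/δ = Real.exp L := by rw [hLdef, this]
        _ < Real.exp (11/4) := Real.exp_lt_exp.2 hcase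
        _ < 16 := hexplt
    have hn8 : n < 8 := by
      have : 2*n < 2*n/δ := by
        rw [lt_div_iff₀ hδ0]
        nlinarith
      linarith
    have hN7 : n ≤ 7 := by
      rw [hndef] at hn8 ⊢
      have h8 : N < 8 := by exact_mod_cast hn8
      have h7 : N ≤ 7 := by omega
      exact_mod_cast h7
    have hμL : 0 ≤ μ * L := by positivity
    nlinarith

/-- uniform interval-counting bound for adaptive smooth points.  Let
`(d_{i,j})_{i∈[T],j∈[ℓ]}` be points of `[0,1]` generated by a `Tℓ`-step adaptive sequence of
`σ`-smooth distributions.  Then with probability at least `1 − δ`, every interval of width at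
most `w` contains fewer than
`(Tℓw/σ)·ln(2Tℓ/δ) + 10·√((Tℓw/σ)·ln(2Tℓ/δ)·ln(1/δ)) + 10·log(10·Tℓ·log(2Tℓ/δ)/(σδ))`
of the points. -/
theorem adaptive_smooth_interval_count
    (σ : ℝ) (hσ0 : 0 < σ) (hσ1 : σ ≤ 1) (T ℓ : ℕ) (hT : 0 < T) (hℓ : 0 < ℓ)
    (w : ℝ) (hw : 0 < w) (δ : ℝ) (hδ0 : 0 < δ) (hδ1 : δ < 1)
    (D : (s : ℕ) → Kernel (Fin s → ℝ) ℝ) (hD : ∀ s, IsMarkovKernel (D s))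
    (hsmooth : ∀ (s : ℕ) (h : Fin s → ℝ) (A : Set ℝ), MeasurableSet A →
      (D s) h A ≤ ENNReal.ofReal (1 / σ) * volume (A ∩ Set.Icc (0 : ℝ) 1)) :
    ENNReal.ofReal (1 - δ)
      ≤ adaptLaw D (T * ℓ) {traj | ∀ a b : ℝ, a ≤ b → b - a ≤ w →
          (((Finset.univ : Finset (Fin T × Fin ℓ)).filter
              (fun ij => traj (finProdFinEquiv ij) ∈ Set.Icc a b)).card : ℝ)
            < (T * ℓ * w / σ) * Real.log (2 * T * ℓ / δ)
              + 10 * Real.sqrt ((T * ℓ * w / σ) * Real.log (2 * T * ℓ / δ) * Real.log (1 / δ))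
              + 10 * Real.log (10 * T * ℓ * Real.log (2 * T * ℓ / δ) / (σ * δ))} := by
  have hNpos : 0 < T * ℓ := Nat.mul_pos hT hℓ
  set N : ℕ := T * ℓ with hNdef
  have hN : 1 ≤ N := hNpos
  haveI := adaptLaw_isProb D hD N
  have hnR : (1:ℝ) ≤ (N:ℝ) := by exact_mod_cast hN
  set K : ℝ := (N:ℝ)*(2*w/σ) + (3 * Real.sqrt ((N:ℝ)*(2*w/σ) * Real.log (N/δ))
      + 2 * Real.log (N/δ)) with hKdef
  have hL'0 : 0 ≤ Real.log ((N:ℝ)/δ) := by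
    apply Real.log_nonneg
    rw [le_div_iff₀ hδ0]
    nlinarith
  have hK0 : 0 ≤ K := by
    rw [hKdef]
    have h1 : (0:ℝ) ≤ (N:ℝ)*(2*w/σ) := by positivity
    have h2 := Real.sqrt_nonneg ((N:ℝ)*(2*w/σ) * Real.log (N/δ))
    linarith
  set bad : Fin N → Set (Fin N → ℝ) := fun m =>
      {h : Fin N → ℝ | K ≤ (cnt w ((m:ℕ)+1) (Nat.succ_le_of_lt m.isLt)
          (fun g => g (Fin.last (m:ℕ))) h : ℝ)} with hbaddef
  have hbadmeas : ∀ m, MeasurableSet (bad m) := fun m =>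
    measurableSet_le measurable_const
      (measurable_cnt w ((m:ℕ)+1) (Nat.succ_le_of_lt m.isLt) (measurable_pi_apply _))
  have hbadle : ∀ m, adaptLaw D N (bad m) ≤ ENNReal.ofReal (δ/N) := by
    intro m
    apply tail_bound D hD σ w δ hσ0 hw hδ0 hδ1 hsmooth N hN K ?_ (m:ℕ)
      (Nat.succ_le_of_lt m.isLt)
    rw [hKdef]
    exact choose_lam (N:ℝ) w σ δ hnR hw hσ0 hδ0 hδ1
  have hUmeas : MeasurableSet (⋃ m, bad m) := MeasurableSet.iUnion hbadmeas
  have hUnion : adaptLaw D N (⋃ m, bad m) ≤ ENNReal.ofReal δ := by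
    refine le_trans (measure_iUnion_le _) ?_
    rw [tsum_fintype]
    refine le_trans (Finset.sum_le_sum fun m _ => hbadle m) ?_
    rw [Finset.sum_const, Finset.card_univ, Fintype.card_fin, nsmul_eq_mul]
    rw [← ENNReal.ofReal_natCast N, ← ENNReal.ofReal_mul (by positivity)]
    apply ENNReal.ofReal_le_ofReal
    rw [mul_div_cancel₀]
    positivity
  have hincl : (⋃ m, bad m)ᶜ ⊆ {traj : Fin N → ℝ | ∀ a b : ℝ, a ≤ b → b - a ≤ w →
          (((Finset.univ : Finset (Fin T × Fin ℓ)).filter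
              (fun ij => traj (finProdFinEquiv ij) ∈ Set.Icc a b)).card : ℝ)
            < (T * ℓ * w / σ) * Real.log (2 * T * ℓ / δ)
              + 10 * Real.sqrt ((T * ℓ * w / σ) * Real.log (2 * T * ℓ / δ) * Real.log (1 / δ))
              + 10 * Real.log (10 * T * ℓ * Real.log (2 * T * ℓ / δ) / (σ * δ))} := by
    intro h hh
    simp only [Set.mem_compl_iff, Set.mem_iUnion, not_exists] at hh
    intro a b hab hba
    have hcard : ((Finset.univ : Finset (Fin T × Fin ℓ)).filter
          (fun ij => h (finProdFinEquiv ij) ∈ Set.Icc a b)).card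
        = ((Finset.univ : Finset (Fin N)).filter
          (fun s => h s ∈ Set.Icc a b)).card := by
      refine Finset.card_bij' (fun ij _ => finProdFinEquiv ij)
        (fun s _ => finProdFinEquiv.symm s) ?_ ?_ ?_ ?_
      · intro ij hij
        simp only [Finset.mem_filter, Finset.mem_univ, true_and] at hij ⊢
        exact hij
      · intro s hs
        simp only [Finset.mem_filter, Finset.mem_univ, true_and,
          Equiv.apply_symm_apply] at hs ⊢
        exact hs
      · intro ij _; exact finProdFinEquiv.symm_apply_apply ij
      · intro s _; exact finProdFinEquiv.apply_symm_apply s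
    rw [hcard]
    set Sset := (Finset.univ : Finset (Fin N)).filter (fun s => h s ∈ Set.Icc a b)
      with hSdef
    have hcard1 : ((Sset.card : ℕ) : ℝ) ≤ (N:ℝ) := by
      have h1 : Sset.card ≤ N := by
        calc Sset.card ≤ (Finset.univ : Finset (Fin N)).card := Finset.card_filter_le _ _
          _ = N := by simp
      exact_mod_cast h1
    have hcard2 : ((Sset.card : ℕ) : ℝ) < K + 1 := by
      rcases Finset.eq_empty_or_nonempty Sset with he | hne
      · rw [he]
        simp only [Finset.card_empty, Nat.cast_zero]
        linarith
      · set m₀ := Sset.min' hne with hm₀def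
        have hm₀mem : m₀ ∈ Sset := Sset.min'_mem hne
        have hm₀ab : h m₀ ∈ Set.Icc a b := (Finset.mem_filter.1 hm₀mem).2
        have hleN : (m₀:ℕ)+1 ≤ N := Nat.succ_le_of_lt m₀.isLt
        have hc1 : Fin.castLE hleN (Fin.last (m₀:ℕ)) = m₀ := by
          apply Fin.ext
          simp
        have hcenter : h (Fin.castLE hleN (Fin.last (m₀:ℕ))) = h m₀ := congrArg h hc1
        have hkey : Sset.card ≤ 1 + cnt w ((m₀:ℕ)+1) hleN
            (fun g => g (Fin.last (m₀:ℕ))) h := by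
          rw [cnt]
          have hsubs : Sset ⊆ insert m₀ (Finset.univ.filter fun s : Fin N =>
              (m₀:ℕ)+1 ≤ (s : ℕ) ∧
              |h s - (fun g : Fin ((m₀:ℕ)+1) → ℝ => g (Fin.last (m₀:ℕ)))
                (fun i => h (Fin.castLE hleN i))| ≤ w) := by
            intro s hs
            rcases eq_or_ne s m₀ with rfl | hne'
            · exact Finset.mem_insert_self _ _
            · apply Finset.mem_insert_of_mem
              have hsab : h s ∈ Set.Icc a b := (Finset.mem_filter.1 hs).2
              refine Finset.mem_filter.2 ⟨Finset.mem_univ _, ?_, ?_⟩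
              · have hlt : m₀ < s := lt_of_le_of_ne (Sset.min'_le s hs) (Ne.symm hne')
                exact Nat.succ_le_of_lt hlt
              · show |h s - h (Fin.castLE hleN (Fin.last (m₀:ℕ)))| ≤ w
                rw [hcenter]
                rcases Set.mem_Icc.1 hsab with ⟨h1, h2⟩
                rcases Set.mem_Icc.1 hm₀ab with ⟨h3, h4⟩
                exact abs_le.2 ⟨by linarith, by linarith⟩
          refine le_trans (Finset.card_le_card hsubs) ?_
          refine le_trans (Finset.card_insert_le _ _) ?_
          exact le_of_eq (Nat.add_comm _ _)
        have hgood := hh m₀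
        simp only [hbaddef, Set.mem_setOf_eq, not_le] at hgood
        have : ((Sset.card : ℕ) : ℝ) ≤ 1 + (cnt w ((m₀:ℕ)+1) hleN
            (fun g => g (Fin.last (m₀:ℕ))) h : ℝ) := by exact_mod_cast hkey
        linarith
    have harith := arith_bound σ w δ N hσ0 hσ1 hw hδ0 hδ1 hN _ hcard1 (by
      rw [hKdef] at hcard2; exact hcard2)
    have eq2 : 2*(T:ℝ)*(ℓ:ℝ)/δ = 2*(N:ℝ)/δ := by rw [hNdef]; push_cast; ring
    have eq1 : (T:ℝ)*(ℓ:ℝ)*w/σ = (N:ℝ)*w/σ := by rw [hNdef]; push_cast; ring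
    have eq3 : 10*(T:ℝ)*(ℓ:ℝ)*Real.log (2*(N:ℝ)/δ)/(σ*δ)
        = 10*(N:ℝ)*Real.log (2*(N:ℝ)/δ)/(σ*δ) := by rw [hNdef]; push_cast; ring
    rw [eq2, eq1, eq3]
    exact harith
  calc ENNReal.ofReal (1-δ) = 1 - ENNReal.ofReal δ := by
        rw [ENNReal.ofReal_sub _ hδ0.le, ENNReal.ofReal_one]
    _ ≤ 1 - adaptLaw D N (⋃ m, bad m) := tsub_le_tsub_left hUnion 1
    _ = adaptLaw D N (⋃ m, bad m)ᶜ := (prob_compl_eq_one_sub hUmeas).symm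
    _ ≤ _ := measure_mono hincl
end

section
/- Let n, T ∈ ℕ, let U be the uniform (normalized Lebesgue) probability measure on the closed unit Euclidean ball of ℝⁿ, and let u ∈ ℝⁿ be a nonzero vector. Then U( { x : ‖x‖₂ ≤ 1 and |⟨x, u⟩| ≤ ‖u‖₂ / (n²T²) } ) ≥ 1/(20·n²·T²). In particular, the uniform distribution on the slab { x : ‖x‖₂ ≤ 1, |⟨x, u⟩| ≤ ‖u‖₂·n^{-2}T^{-2} } is (1/(20n²T²))-smooth with respect to U. -/
open MeasureTheory
open scoped ENNReal RealInnerProductSpace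

/-- The slab of the unit ball consisting of points nearly orthogonal to `u`:
`{x : ‖x‖₂ ≤ 1, |⟨x,u⟫| ≤ ‖u‖₂/(n²T²)}`. -/
def slab (n T : ℕ) (u : Fin n → ℝ) : Set (Fin n → ℝ) :=
  {x | ∑ i, x i ^ 2 ≤ 1 ∧
    |∑ i, x i * u i| ≤ Real.sqrt (∑ i, u i ^ 2) / ((n : ℝ) ^ 2 * (T : ℝ) ^ 2)}

private lemma measurable_sum_sq (m : ℕ) : Measurable fun x : Fin m → ℝ => ∑ i, x i ^ 2 :=
  Finset.measurable_sum _ fun i _ => (measurable_pi_apply i).pow_const 2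

private lemma sum_sq_le_iff {m : ℕ} (y : EuclideanSpace ℝ (Fin m)) {r : ℝ} (hr : 0 ≤ r) :
    ∑ i, y i ^ 2 ≤ r ^ 2 ↔ ‖y‖ ≤ r := by
  rw [EuclideanSpace.norm_eq]
  simp only [Real.norm_eq_abs, sq_abs]
  constructor
  · intro h
    calc Real.sqrt (∑ i, y i ^ 2) ≤ Real.sqrt (r ^ 2) := Real.sqrt_le_sqrt h
    _ = r := Real.sqrt_sq hr
  · intro h
    have h0 : (0:ℝ) ≤ ∑ i, y i ^ 2 := Finset.sum_nonneg fun i _ => sq_nonneg _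
    calc ∑ i, y i ^ 2 = Real.sqrt (∑ i, y i ^ 2) ^ 2 := (Real.sq_sqrt h0).symm
    _ ≤ r ^ 2 := by
        have h1 := Real.sqrt_nonneg (∑ i, y i ^ 2); nlinarith

private lemma volume_sum_sq_le (m : ℕ) {r : ℝ} (hr : 0 ≤ r) :
    volume {y : Fin m → ℝ | ∑ j, y j ^ 2 ≤ r ^ 2}
      = ENNReal.ofReal (r ^ m) * volume (Metric.closedBall (0 : EuclideanSpace ℝ (Fin m)) 1) := by
  have hmeas : NullMeasurableSet {y : Fin m → ℝ | ∑ j, y j ^ 2 ≤ r ^ 2} volume :=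
    (measurableSet_le (measurable_sum_sq m) measurable_const).nullMeasurableSet
  have h1 := (EuclideanSpace.volume_preserving_symm_measurableEquiv_toLp (Fin m)).measure_preimage hmeas
  have h2 : (MeasurableEquiv.toLp 2 (Fin m → ℝ)).symm ⁻¹' {y : Fin m → ℝ | ∑ j, y j ^ 2 ≤ r ^ 2}
      = Metric.closedBall (0 : EuclideanSpace ℝ (Fin m)) r := by
    ext y
    simp only [Set.mem_preimage, Set.mem_setOf_eq, Metric.mem_closedBall, dist_zero_right]
    exact sum_sq_le_iff y hr
  rw [← h1, h2, Measure.addHaar_closedBall' _ _ hr, finrank_euclideanSpace_fin]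

private lemma volume_rotate (m : ℕ) (u : Fin (m + 1) → ℝ) (hu : u ≠ 0) (d : ℝ) :
    volume {x : Fin (m + 1) → ℝ | ∑ i, x i ^ 2 ≤ 1 ∧
        |∑ i, x i * u i| ≤ Real.sqrt (∑ i, u i ^ 2) / d}
      = volume {x : Fin (m + 1) → ℝ | ∑ i, x i ^ 2 ≤ 1 ∧ |x 0| ≤ 1 / d} := by
  classical
  set E := EuclideanSpace ℝ (Fin (m + 1))
  set uE : E := (WithLp.equiv 2 (Fin (m + 1) → ℝ)).symm u with huE_def
  have huE : uE ≠ 0 := by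
    intro h; apply hu; have := congrArg WithLp.ofLp h; simpa [huE_def] using this
  have hupos : 0 < ‖uE‖ := norm_pos_iff.mpr huE
  have hnormuE : ‖uE‖ = Real.sqrt (∑ i, u i ^ 2) := by
    rw [EuclideanSpace.norm_eq]
    simp [huE_def, Real.norm_eq_abs, sq_abs, WithLp.equiv_symm_apply]
  set w : E := ‖uE‖⁻¹ • uE with hw_def
  have hw : ‖w‖ = 1 := norm_smul_inv_norm huE
  have horth : Orthonormal ℝ (({0} : Set (Fin (m + 1))).restrict fun _ => w) := by
    refine ⟨fun i => hw, fun i j hij => absurd ?_ hij⟩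
    exact Subtype.ext (i.2.trans j.2.symm)
  have hcard : Module.finrank ℝ E = Fintype.card (Fin (m + 1)) := by
    rw [Fintype.card_fin]
    exact finrank_euclideanSpace_fin
  obtain ⟨b, hb⟩ := horth.exists_orthonormalBasis_extension_of_card_eq hcard
  have hb0 : b 0 = w := hb 0 rfl
  set φ := (MeasurableEquiv.toLp 2 (Fin (m + 1) → ℝ)).symm
  set ψ : (Fin (m + 1) → ℝ) ≃ᵐ (Fin (m + 1) → ℝ) := (φ.symm.trans b.measurableEquiv).trans φ
    with hψ_def
  have hψ : MeasurePreserving ψ volume volume :=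
    ((EuclideanSpace.volume_preserving_symm_measurableEquiv_toLp _).comp
      b.measurePreserving_measurableEquiv).comp
        (EuclideanSpace.volume_preserving_symm_measurableEquiv_toLp _).symm
  have hmeas : MeasurableSet {x : Fin (m + 1) → ℝ | ∑ i, x i ^ 2 ≤ 1 ∧ |x 0| ≤ 1 / d} :=
    (measurableSet_le (measurable_sum_sq _) measurable_const).inter
      (measurableSet_le (measurable_pi_apply 0).abs measurable_const)
  have hset : {x : Fin (m + 1) → ℝ | ∑ i, x i ^ 2 ≤ 1 ∧
        |∑ i, x i * u i| ≤ Real.sqrt (∑ i, u i ^ 2) / d}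
      = ψ ⁻¹' {x : Fin (m + 1) → ℝ | ∑ i, x i ^ 2 ≤ 1 ∧ |x 0| ≤ 1 / d} := by
    ext x
    have hψx : ∀ i, ψ x i = b.repr ((WithLp.equiv 2 (Fin (m + 1) → ℝ)).symm x) i := fun i => rfl
    set x' : E := (WithLp.equiv 2 (Fin (m + 1) → ℝ)).symm x with hx'_def
    have hxi : ∀ i, x' i = x i := fun i => rfl
    have hrepr0 : b.repr x' 0 = ‖uE‖⁻¹ * ∑ i, u i * x i := by
      rw [OrthonormalBasis.repr_apply_apply, hb0, hw_def, real_inner_smul_left]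
      congr 1
      rw [PiLp.inner_apply]
      exact Finset.sum_congr rfl fun i _ => by simp [huE_def, hx'_def, mul_comm]
    have hcond1 : (∑ i, ψ x i ^ 2 ≤ 1) ↔ (∑ i, x i ^ 2 ≤ 1) := by
      have e1 : (∑ i, (b.repr x') i ^ 2 ≤ (1:ℝ) ^ 2) ↔ ‖b.repr x'‖ ≤ 1 :=
        sum_sq_le_iff _ zero_le_one
      have e2 : (∑ i, x' i ^ 2 ≤ (1:ℝ) ^ 2) ↔ ‖x'‖ ≤ 1 := sum_sq_le_iff _ zero_le_one
      simp only [hψx, one_pow] at e1 e2 ⊢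
      rw [e1, b.repr.norm_map, ← e2]
      exact Iff.rfl
    have hcond2 : (|ψ x 0| ≤ 1 / d) ↔
        (|∑ i, x i * u i| ≤ Real.sqrt (∑ i, u i ^ 2) / d) := by
      rw [hψx, hrepr0, abs_mul, abs_of_pos (inv_pos.mpr hupos), ← hnormuE]
      rw [inv_mul_le_iff₀ hupos]
      have : ∑ i, x i * u i = ∑ i, u i * x i :=
        Finset.sum_congr rfl fun i _ => mul_comm _ _
      rw [this, mul_one_div]
    simp only [Set.mem_preimage, Set.mem_setOf_eq]
    exact (and_congr hcond1 hcond2).symm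
  rw [hset, hψ.measure_preimage hmeas.nullMeasurableSet]

set_option maxHeartbeats 1000000 in
/-- the near-orthogonal slab has non-negligible uniform measure.  For any
nonzero `u`, the slab `{x : ‖x‖₂ ≤ 1, |⟨x,u⟩| ≤ ‖u‖₂/(n²T²)}` has uniform measure at least
`1/(20n²T²)`; in particular, the uniform distribution on the slab is `1/(20n²T²)`-smooth. -/
theorem slab_measure_lower_bound
    (n T : ℕ) (hn : 0 < n) (hT : 0 < T) (u : Fin n → ℝ) (hu : u ≠ 0) :
    ENNReal.ofReal (1 / (20 * (n : ℝ) ^ 2 * (T : ℝ) ^ 2)) ≤ unifBall n (slab n T u) ∧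
    ∀ A : Set (Fin n → ℝ), MeasurableSet A →
      ((unifBall n (slab n T u))⁻¹ • (unifBall n).restrict (slab n T u)) A
        ≤ unifBall n A / ENNReal.ofReal (1 / (20 * (n : ℝ) ^ 2 * (T : ℝ) ^ 2)) := by
  obtain ⟨m, rfl⟩ := Nat.exists_eq_succ_of_ne_zero hn.ne'
  -- basic real number facts
  set A : ℝ := ((m + 1 : ℕ) : ℝ) ^ 2 * (T : ℝ) ^ 2 with hA_def
  have hT1 : (1 : ℝ) ≤ (T : ℝ) := by exact_mod_cast hT
  have hm1 : (1 : ℝ) ≤ ((m + 1 : ℕ) : ℝ) := by exact_mod_cast Nat.succ_le_succ (Nat.zero_le m)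
  have hm2 : (1 : ℝ) ≤ ((m + 1 : ℕ) : ℝ) ^ 2 := by nlinarith
  have hT2 : (1 : ℝ) ≤ (T : ℝ) ^ 2 := by nlinarith
  have hA1 : (1 : ℝ) ≤ A := by rw [hA_def]; nlinarith [hm2, hT2]
  have hA : (0 : ℝ) < A := lt_of_lt_of_le one_pos hA1
  set ε : ℝ := 1 / A with hε_def
  have hε : 0 < ε := by positivity
  have hε1 : ε ≤ 1 := by
    rw [hε_def]
    rw [div_le_one hA]; exact hA1
  have hmε : (m : ℝ) * ε ≤ 1 / 2 := by
    rw [hε_def, mul_one_div, div_le_div_iff₀ hA two_pos, one_mul, hA_def]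
    have h2m : (2 : ℝ) * m ≤ ((m + 1 : ℕ) : ℝ) ^ 2 := by
      push_cast
      nlinarith [sq_nonneg ((m : ℝ) - 1)]
    nlinarith [h2m, hT2, mul_nonneg (by linarith : (0:ℝ) ≤ (T : ℝ) ^ 2 - 1)
      (sq_nonneg ((m + 1 : ℕ) : ℝ))]
  have hber : (1 : ℝ) / 2 ≤ (1 - ε) ^ m := by
    have h := one_add_mul_le_pow (a := -ε) (by linarith) m
    have h2 : 1 + (m : ℝ) * (-ε) ≤ (1 - ε) ^ m := by
      rw [show (1 : ℝ) - ε = 1 + -ε by ring]; exact h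
    linarith
  -- measurability facts
  have hball_meas : MeasurableSet (ballSet (m + 1)) :=
    measurableSet_le (measurable_sum_sq _) measurable_const
  have hslab_meas : MeasurableSet (slab (m + 1) T u) :=
    (measurableSet_le (measurable_sum_sq _) measurable_const).inter
      (measurableSet_le (f := fun x : Fin (m + 1) → ℝ => |∑ i, x i * u i|)
        ((Finset.measurable_sum _ fun i _ => by fun_prop).abs)
        measurable_const)
  have hslab_sub : slab (m + 1) T u ⊆ ballSet (m + 1) := fun x hx => hx.1
  -- dimension-m unit ball volume
  set Vm : ℝ≥0∞ := volume (Metric.closedBall (0 : EuclideanSpace ℝ (Fin m)) 1) with hVm_def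
  have hVm0 : Vm ≠ 0 := by
    refine (lt_of_lt_of_le ?_ (measure_mono Metric.ball_subset_closedBall)).ne'
    exact Metric.measure_ball_pos volume _ one_pos
  have hVmT : Vm ≠ ∞ := (isCompact_closedBall _ _).measure_lt_top.ne
  -- rotation: the slab has the same volume as an axis-aligned slab
  have hrot : volume (slab (m + 1) T u)
      = volume {x : Fin (m + 1) → ℝ | ∑ i, x i ^ 2 ≤ 1 ∧ |x 0| ≤ ε} := by
    rw [hε_def, hA_def]
    exact volume_rotate m u hu _
  -- Fubini: lower bound for the axis-aligned slab
  set e := MeasurableEquiv.piFinSuccAbove (fun _ : Fin (m + 1) => ℝ) 0 with he_def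
  have he : MeasurePreserving e volume volume := volume_preserving_piFinSuccAbove _ 0
  have hex : ∀ x : Fin (m + 1) → ℝ, e x = (x 0, fun j => x ((0 : Fin (m + 1)).succAbove j)) :=
    fun x => rfl
  have hlow : ENNReal.ofReal (2 * ε) * (ENNReal.ofReal ((1 - ε) ^ m) * Vm)
      ≤ volume {x : Fin (m + 1) → ℝ | ∑ i, x i ^ 2 ≤ 1 ∧ |x 0| ≤ ε} := by
    have hsub : e ⁻¹' (Set.Icc (-ε) ε ×ˢ {y : Fin m → ℝ | ∑ j, y j ^ 2 ≤ (1 - ε) ^ 2})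
        ⊆ {x : Fin (m + 1) → ℝ | ∑ i, x i ^ 2 ≤ 1 ∧ |x 0| ≤ ε} := by
      intro x hx
      rw [Set.mem_preimage, hex, Set.mem_prod] at hx
      obtain ⟨h1, h2⟩ := hx
      simp only [Set.mem_Icc] at h1
      simp only [Set.mem_setOf_eq] at h2 ⊢
      constructor
      · rw [Fin.sum_univ_succAbove _ 0]
        have hx0 : x 0 ^ 2 ≤ ε ^ 2 := sq_le_sq' h1.1 h1.2
        nlinarith
      · exact abs_le.mpr ⟨h1.1, h1.2⟩
    calc ENNReal.ofReal (2 * ε) * (ENNReal.ofReal ((1 - ε) ^ m) * Vm)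
        = volume (e ⁻¹' (Set.Icc (-ε) ε ×ˢ {y : Fin m → ℝ | ∑ j, y j ^ 2 ≤ (1 - ε) ^ 2})) := by
          rw [he.measure_preimage ((measurableSet_Icc.prod
            (measurableSet_le (measurable_sum_sq m) measurable_const)).nullMeasurableSet)]
          rw [Measure.volume_eq_prod, Measure.prod_prod, Real.volume_Icc,
            volume_sum_sq_le m (by linarith : (0:ℝ) ≤ 1 - ε)]
          congr 1
          rw [ENNReal.ofReal_eq_ofReal_iff (by linarith) (by linarith)]
          ring
      _ ≤ _ := measure_mono hsub
  -- Fubini: upper bound for the ball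
  have hup : volume (ballSet (m + 1)) ≤ ENNReal.ofReal 2 * Vm := by
    have hsub : ballSet (m + 1)
        ⊆ e ⁻¹' (Set.Icc (-1 : ℝ) 1 ×ˢ {y : Fin m → ℝ | ∑ j, y j ^ 2 ≤ (1 : ℝ) ^ 2}) := by
      intro x hx
      rw [Set.mem_preimage, hex, Set.mem_prod]
      have hx' : ∑ i, x i ^ 2 ≤ 1 := hx
      rw [Fin.sum_univ_succAbove _ 0] at hx'
      have htail : (0:ℝ) ≤ ∑ j, x ((0 : Fin (m + 1)).succAbove j) ^ 2 :=
        Finset.sum_nonneg fun j _ => sq_nonneg _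
      constructor
      · simp only [Set.mem_Icc]
        have : x 0 ^ 2 ≤ 1 := by nlinarith
        have habs : |x 0| ≤ 1 := by nlinarith [sq_abs (x 0), abs_nonneg (x 0)]
        exact abs_le.mp habs
      · simp only [Set.mem_setOf_eq, one_pow]
        nlinarith [sq_nonneg (x 0)]
    calc volume (ballSet (m + 1)) ≤ _ := measure_mono hsub
      _ = ENNReal.ofReal 2 * Vm := by
          rw [he.measure_preimage ((measurableSet_Icc.prod
            (measurableSet_le (measurable_sum_sq m) measurable_const)).nullMeasurableSet)]
          rw [Measure.volume_eq_prod, Measure.prod_prod, Real.volume_Icc,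
            volume_sum_sq_le m zero_le_one]
          rw [one_pow, ENNReal.ofReal_one, one_mul]
          congr 1
          norm_num
  -- the measure of the slab under the uniform measure
  have happly : unifBall (m + 1) (slab (m + 1) T u)
      = (volume (ballSet (m + 1)))⁻¹ * volume (slab (m + 1) T u) := by
    rw [unifBall, Measure.smul_apply, smul_eq_mul,
      Measure.restrict_apply hslab_meas, Set.inter_eq_left.mpr hslab_sub]
  -- the key lower bound
  have hkey : ENNReal.ofReal (1 / (20 * ((m + 1 : ℕ) : ℝ) ^ 2 * (T : ℝ) ^ 2))
      ≤ unifBall (m + 1) (slab (m + 1) T u) := by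
    rw [happly]
    have hreal : 1 / (20 * ((m + 1 : ℕ) : ℝ) ^ 2 * (T : ℝ) ^ 2) ≤ ε * (1 - ε) ^ m := by
      have h1 : 1 / (20 * ((m + 1 : ℕ) : ℝ) ^ 2 * (T : ℝ) ^ 2) = ε * (1 / 20) := by
        rw [hε_def, hA_def]
        field_simp
      rw [h1]
      have h2 : (1 : ℝ) / 20 ≤ (1 - ε) ^ m := by linarith
      exact mul_le_mul_of_nonneg_left h2 hε.le
    calc ENNReal.ofReal (1 / (20 * ((m + 1 : ℕ) : ℝ) ^ 2 * (T : ℝ) ^ 2))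
        ≤ ENNReal.ofReal (ε * (1 - ε) ^ m) := ENNReal.ofReal_le_ofReal hreal
      _ = (ENNReal.ofReal 2 * Vm)⁻¹
          * (ENNReal.ofReal (2 * ε) * (ENNReal.ofReal ((1 - ε) ^ m) * Vm)) := by
          have h2ne0 : (ENNReal.ofReal 2) ≠ 0 := by
            simp [ENNReal.ofReal_eq_zero]
          have h2neT : (ENNReal.ofReal 2) ≠ ∞ := ENNReal.ofReal_ne_top
          rw [ENNReal.mul_inv (Or.inl h2ne0) (Or.inl h2neT)]
          rw [ENNReal.ofReal_mul (by norm_num : (0:ℝ) ≤ 2),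
            ENNReal.ofReal_mul hε.le]
          calc ENNReal.ofReal ε * ENNReal.ofReal ((1 - ε) ^ m)
              = ((ENNReal.ofReal 2)⁻¹ * ENNReal.ofReal 2) * ((Vm⁻¹ * Vm))
                * (ENNReal.ofReal ε * ENNReal.ofReal ((1 - ε) ^ m)) := by
                rw [ENNReal.inv_mul_cancel h2ne0 h2neT, ENNReal.inv_mul_cancel hVm0 hVmT,
                  one_mul, one_mul]
            _ = (ENNReal.ofReal 2)⁻¹ * Vm⁻¹
                * (ENNReal.ofReal 2 * ENNReal.ofReal ε * (ENNReal.ofReal ((1 - ε) ^ m) * Vm)) := by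
                ring
      _ ≤ (volume (ballSet (m + 1)))⁻¹ * volume (slab (m + 1) T u) := by
          refine mul_le_mul' (ENNReal.inv_le_inv.mpr hup) ?_
          rw [hrot]
          exact hlow
  refine ⟨hkey, fun A' hA' => ?_⟩
  -- smoothness
  have hc0 : ENNReal.ofReal (1 / (20 * ((m + 1 : ℕ) : ℝ) ^ 2 * (T : ℝ) ^ 2)) ≠ 0 := by
    rw [Ne, ENNReal.ofReal_eq_zero, not_le]
    positivity
  rw [Measure.smul_apply, smul_eq_mul]
  calc (unifBall (m + 1) (slab (m + 1) T u))⁻¹ * (unifBall (m + 1)).restrict (slab (m + 1) T u) A'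
      ≤ (ENNReal.ofReal (1 / (20 * ((m + 1 : ℕ) : ℝ) ^ 2 * (T : ℝ) ^ 2)))⁻¹
        * unifBall (m + 1) A' := by
        refine mul_le_mul' (ENNReal.inv_le_inv.mpr hkey) ?_
        exact Measure.restrict_apply_le _ _
    _ = unifBall (m + 1) A'
        / ENNReal.ofReal (1 / (20 * ((m + 1 : ℕ) : ℝ) ^ 2 * (T : ℝ) ^ 2)) := by
        rw [ENNReal.div_eq_inv_mul]
end
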